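/- Let A, C be bounded self-adjoint operators and B a bounded operator as in the block-matrix setup. Suppose σ(C) ⊆ (-∞, α] ∪ [β, ∞) where α < β, and σ(A) ⊂ (α, β). Then for every λ ∈ (α, β) and every unit vector f ∈ H_A, the quadratic form of M(λ) = λ I - A + B (C - λ I)^{-1} B* satisfies the two-sided estimate λ - sup σ(A) - ‖B‖²/(λ - α) ≤ ⟨M(λ) f, f⟩ ≤ λ - inf σ(A) - ‖B‖²/(λ - β). -/

import Mathlib

open scoped InnerProductSpace

section Aux

variable {H : Type*} [NormedAddCommGroup H] [InnerProductSpace ℂ H] [CompleteSpace H]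

private lemma aux_inner_nonneg (S : H →L[ℂ] H) (hS : IsSelfAdjoint S)
    (h : ∀ x ∈ spectrum ℝ S, 0 ≤ x) (y : H) :
    0 ≤ (⟪S y, y⟫_ℂ).re := by
  have h0 : (0 : H →L[ℂ] H) ≤ S :=
    (StarOrderedRing.nonneg_iff_spectrum_nonneg (R := ℝ) S hS).mpr h
  have := ((ContinuousLinearMap.nonneg_iff_isPositive S).mp h0).inner_nonneg_left y
  simpa using (RCLike.nonneg_iff.mp this).1

private lemma aux_alg_selfAdjoint (r : ℝ) :
    IsSelfAdjoint (algebraMap ℝ (H →L[ℂ] H) r) := by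
  exact IsSelfAdjoint.algebraMap _ (star_trivial r)

private lemma aux_alg_inner (r : ℝ) (y : H) :
    (⟪(algebraMap ℝ (H →L[ℂ] H) r) y, y⟫_ℂ).re = r * ‖y‖ ^ 2 := by
  rw [Algebra.algebraMap_eq_smul_one]
  simp only [ContinuousLinearMap.smul_apply, ContinuousLinearMap.one_apply]
  rw [← Complex.coe_smul, inner_smul_left, inner_self_eq_norm_sq_to_K, Complex.conj_ofReal]
  simp [Complex.re_ofReal_mul, ← Complex.ofReal_pow]

private lemma aux_inverse_selfAdjoint (D : H →L[ℂ] H) (hD : IsSelfAdjoint D)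
    (hu : IsUnit D) : IsSelfAdjoint (Ring.inverse D) := by
  set T := Ring.inverse D with hT
  have h2 : D * T = 1 := Ring.mul_inverse_cancel D hu
  have h3 : star T * D = 1 := by
    have := congrArg star h2
    rwa [star_mul, hD.star_eq, star_one] at this
  calc star T = star T * (D * T) := by rw [h2, mul_one]
    _ = (star T * D) * T := by rw [mul_assoc]
    _ = T := by rw [h3, one_mul]

private lemma aux_inverse_spectrum (C : H →L[ℂ] H)
    (α β lam : ℝ)
    (hCspec : spectrum ℝ C ⊆ Set.Iic α ∪ Set.Ici β)
    (hlam : lam ∈ Set.Ioo α β)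
    (hu : IsUnit (C - (lam : ℂ) • 1)) :
    ∀ x ∈ spectrum ℝ (Ring.inverse (C - (lam : ℂ) • 1)),
      -(lam - α)⁻¹ ≤ x ∧ x ≤ (β - lam)⁻¹ := by
  intro x hx
  have halg : algebraMap ℝ (H →L[ℂ] H) lam = (lam : ℂ) • 1 := by
    rw [Algebra.algebraMap_eq_smul_one, Complex.coe_smul]
  have hunit : (hu.unit : H →L[ℂ] H) = C - (lam : ℂ) • 1 := hu.unit_spec
  rw [← hunit, Ring.inverse_unit] at hx
  have hx0 : x ≠ 0 := by
    rintro rfl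
    exact (spectrum.zero_mem_iff ℝ).mp hx (by simp)
  have hxinv : x⁻¹ ∈ spectrum ℝ ((hu.unit : H →L[ℂ] H)) := by
    have := spectrum.inv₀_mem_inv_iff (r := x⁻¹) (a := hu.unit)
    rw [inv_inv] at this
    exact this.mp hx
  rw [hunit, ← halg, ← spectrum.sub_singleton_eq] at hxinv
  obtain ⟨μ, hμ, l, hl, hml⟩ := Set.mem_sub.mp hxinv
  rw [Set.mem_singleton_iff] at hl
  rw [hl] at hml
  rcases hCspec hμ with hμα | hμβ
  · have h1 : x⁻¹ ≤ α - lam := by rw [← hml]; linarith [Set.mem_Iic.mp hμα]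
    have h2 : (0:ℝ) < lam - α := by linarith [hlam.1]
    have h3 : lam - α ≤ (-x)⁻¹ := by rw [inv_neg]; linarith
    have h4 : x < 0 := by
      rcases hx0.lt_or_gt with h | h
      · exact h
      · exfalso
        have : (0:ℝ) < x⁻¹ := by positivity
        linarith
    constructor
    · have := inv_anti₀ h2 h3
      rw [inv_inv] at this
      linarith
    · have : (0:ℝ) < (β - lam)⁻¹ := by
        have : (0:ℝ) < β - lam := by linarith [hlam.2]
        positivity
      linarith
  · have h1 : β - lam ≤ x⁻¹ := by rw [← hml]; linarith [Set.mem_Ici.mp hμβ]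
    have h2 : (0:ℝ) < β - lam := by linarith [hlam.2]
    constructor
    · have hx' : 0 < x := by
        have : 0 < x⁻¹ := lt_of_lt_of_le h2 h1
        exact inv_pos.mp this
      have : (0:ℝ) < (lam - α)⁻¹ := by
        have : (0:ℝ) < lam - α := by linarith [hlam.1]
        positivity
      linarith
    · have := inv_anti₀ h2 h1
      rwa [inv_inv] at this

end Aux

set_option maxHeartbeats 1000000 in
/-- Two-sided estimate for the quadratic form of the Schur complement
`M(λ) = λI - A + B(C - λI)⁻¹B*` for `λ` in the spectral gap `(α, β)` of `C`:
`λ - sup σ(A) - ‖B‖²/(λ-α) ≤ ⟨M(λ)f, f⟩ ≤ λ - inf σ(A) - ‖B‖²/(λ-β)` for unit `f`. -/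
theorem schur_complement_form_estimate
    {HA HC : Type*} [NormedAddCommGroup HA] [InnerProductSpace ℂ HA] [CompleteSpace HA]
    [Nontrivial HA]
    [NormedAddCommGroup HC] [InnerProductSpace ℂ HC] [CompleteSpace HC]
    (A : HA →L[ℂ] HA) (hA : IsSelfAdjoint A)
    (C : HC →L[ℂ] HC) (hC : IsSelfAdjoint C)
    (B : HC →L[ℂ] HA)
    (α β : ℝ) (hαβ : α < β)
    (hCspec : spectrum ℝ C ⊆ Set.Iic α ∪ Set.Ici β)
    (hAspec : spectrum ℝ A ⊆ Set.Ioo α β)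
    (lam : ℝ) (hlam : lam ∈ Set.Ioo α β)
    (M : HA →L[ℂ] HA)
    (hM : M = (lam : ℂ) • 1 - A +
      B ∘L Ring.inverse (C - (lam : ℂ) • 1) ∘L ContinuousLinearMap.adjoint B)
    (f : HA) (hf : ‖f‖ = 1) :
    lam - sSup (spectrum ℝ A) - ‖B‖ ^ 2 / (lam - α) ≤ (⟪M f, f⟫_ℂ).re ∧
      (⟪M f, f⟫_ℂ).re ≤ lam - sInf (spectrum ℝ A) - ‖B‖ ^ 2 / (lam - β) := by
  have hα : α < lam := hlam.1
  have hβ : lam < β := hlam.2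
  have halgC : algebraMap ℝ (HC →L[ℂ] HC) lam = (lam : ℂ) • 1 := by
    rw [Algebra.algebraMap_eq_smul_one, Complex.coe_smul]
  -- the operator C - λ is invertible
  have hlamC : lam ∉ spectrum ℝ C := by
    intro h
    rcases hCspec h with h' | h'
    · exact absurd (Set.mem_Iic.mp h') (not_le.mpr hα)
    · exact absurd (Set.mem_Ici.mp h') (not_le.mpr hβ)
  have hu : IsUnit (C - (lam : ℂ) • 1) := by
    rw [spectrum.notMem_iff, halgC] at hlamC
    simpa using hlamC.neg
  set T : HC →L[ℂ] HC := Ring.inverse (C - (lam : ℂ) • 1) with hTdef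
  set g : HC := ContinuousLinearMap.adjoint B f with hgdef
  -- D is self-adjoint, hence T is
  have hD : IsSelfAdjoint (C - (lam : ℂ) • 1) := by
    rw [← halgC]
    exact hC.sub (aux_alg_selfAdjoint lam)
  have hT : IsSelfAdjoint T := aux_inverse_selfAdjoint _ hD hu
  have hTspec := aux_inverse_spectrum C α β lam hCspec hlam hu
  -- decomposition of the quadratic form
  have hMff : (⟪M f, f⟫_ℂ).re = lam - (⟪A f, f⟫_ℂ).re + (⟪T g, g⟫_ℂ).re := by
    have hMf : M f = (lam : ℂ) • f - A f + B (T g) := by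
      rw [hM]
      simp only [ContinuousLinearMap.add_apply, ContinuousLinearMap.sub_apply,
        ContinuousLinearMap.smul_apply, ContinuousLinearMap.one_apply,
        ContinuousLinearMap.comp_apply, hTdef, hgdef]
    rw [hMf, inner_add_left, inner_sub_left, inner_smul_left, inner_self_eq_norm_sq_to_K]
    have h3 : ⟪B (T g), f⟫_ℂ = ⟪T g, g⟫_ℂ := by
      rw [hgdef, ContinuousLinearMap.adjoint_inner_right]
    rw [h3, hf]
    simp [Complex.conj_ofReal]
  -- bounds on ⟨A f, f⟩
  have hBddA : BddAbove (spectrum ℝ A) := BddAbove.mono hAspec bddAbove_Ioo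
  have hBddB : BddBelow (spectrum ℝ A) := BddBelow.mono hAspec bddBelow_Ioo
  have hAsup : (⟪A f, f⟫_ℂ).re ≤ sSup (spectrum ℝ A) := by
    set s := sSup (spectrum ℝ A)
    have h0 : ∀ x ∈ spectrum ℝ (algebraMap ℝ (HA →L[ℂ] HA) s - A), 0 ≤ x := by
      intro x hx
      rw [← spectrum.singleton_sub_eq] at hx
      obtain ⟨a, ha, b, hb, hab⟩ := Set.mem_sub.mp hx
      rw [Set.mem_singleton_iff] at ha
      have : b ≤ s := le_csSup hBddA hb
      rw [← hab, ha]
      linarith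
    have := aux_inner_nonneg _ ((aux_alg_selfAdjoint s).sub hA) h0 f
    rw [ContinuousLinearMap.sub_apply, inner_sub_left, Complex.sub_re, aux_alg_inner, hf] at this
    simpa using this
  have hAinf : sInf (spectrum ℝ A) ≤ (⟪A f, f⟫_ℂ).re := by
    set s := sInf (spectrum ℝ A)
    have h0 : ∀ x ∈ spectrum ℝ (A - algebraMap ℝ (HA →L[ℂ] HA) s), 0 ≤ x := by
      intro x hx
      rw [← spectrum.sub_singleton_eq] at hx
      obtain ⟨a, ha, b, hb, hab⟩ := Set.mem_sub.mp hx
      rw [Set.mem_singleton_iff] at hb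
      have : s ≤ a := csInf_le hBddB ha
      rw [← hab, hb]
      linarith
    have := aux_inner_nonneg _ (hA.sub (aux_alg_selfAdjoint s)) h0 f
    rw [ContinuousLinearMap.sub_apply, inner_sub_left, Complex.sub_re, aux_alg_inner, hf] at this
    simpa using this
  -- bounds on ⟨T g, g⟩
  have hgB : ‖g‖ ≤ ‖B‖ := by
    calc ‖g‖ ≤ ‖ContinuousLinearMap.adjoint B‖ * ‖f‖ :=
          (ContinuousLinearMap.adjoint B).le_opNorm f
      _ = ‖B‖ := by rw [hf, mul_one, ContinuousLinearMap.adjoint.norm_map]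
  have hg2 : ‖g‖ ^ 2 ≤ ‖B‖ ^ 2 := by
    have := pow_le_pow_left₀ (norm_nonneg g) hgB 2
    simpa using this
  have hr1pos : (0:ℝ) < (lam - α)⁻¹ := by
    have : (0:ℝ) < lam - α := by linarith
    positivity
  have hr2pos : (0:ℝ) < (β - lam)⁻¹ := by
    have : (0:ℝ) < β - lam := by linarith
    positivity
  have hTlow : -((lam - α)⁻¹ * ‖B‖ ^ 2) ≤ (⟪T g, g⟫_ℂ).re := by
    have h0 : ∀ x ∈ spectrum ℝ (T + algebraMap ℝ (HC →L[ℂ] HC) (lam - α)⁻¹), 0 ≤ x := by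
      intro x hx
      rw [← spectrum.add_singleton_eq] at hx
      obtain ⟨a, ha, b, hb, hab⟩ := Set.mem_add.mp hx
      rw [Set.mem_singleton_iff] at hb
      have := (hTspec a ha).1
      rw [← hab, hb]
      linarith
    have := aux_inner_nonneg _ (hT.add (aux_alg_selfAdjoint _)) h0 g
    rw [ContinuousLinearMap.add_apply, inner_add_left, Complex.add_re, aux_alg_inner] at this
    have hgb : (lam - α)⁻¹ * ‖g‖ ^ 2 ≤ (lam - α)⁻¹ * ‖B‖ ^ 2 :=
      mul_le_mul_of_nonneg_left hg2 hr1pos.le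
    linarith
  have hThigh : (⟪T g, g⟫_ℂ).re ≤ (β - lam)⁻¹ * ‖B‖ ^ 2 := by
    have h0 : ∀ x ∈ spectrum ℝ (algebraMap ℝ (HC →L[ℂ] HC) (β - lam)⁻¹ - T), 0 ≤ x := by
      intro x hx
      rw [← spectrum.singleton_sub_eq] at hx
      obtain ⟨a, ha, b, hb, hab⟩ := Set.mem_sub.mp hx
      rw [Set.mem_singleton_iff] at ha
      have := (hTspec b hb).2
      rw [← hab, ha]
      linarith
    have := aux_inner_nonneg _ ((aux_alg_selfAdjoint _).sub hT) h0 g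
    rw [ContinuousLinearMap.sub_apply, inner_sub_left, Complex.sub_re, aux_alg_inner] at this
    have hgb : (β - lam)⁻¹ * ‖g‖ ^ 2 ≤ (β - lam)⁻¹ * ‖B‖ ^ 2 :=
      mul_le_mul_of_nonneg_left hg2 hr2pos.le
    linarith
  -- put everything together
  have e1 : ‖B‖ ^ 2 / (lam - α) = (lam - α)⁻¹ * ‖B‖ ^ 2 := by rw [div_eq_inv_mul]
  have e2 : ‖B‖ ^ 2 / (lam - β) = -((β - lam)⁻¹ * ‖B‖ ^ 2) := by
    rw [show lam - β = -(β - lam) by ring, div_neg, div_eq_inv_mul]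
  constructor
  · rw [hMff, e1]
    linarith
  · rw [hMff, e2]
    linarith
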